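/- The oracle decorrelated estimator is unbiased, E[τ̂_dc.oracle] = τ*, and its n-rescaled mean-squared error equals n·E[(τ̂_dc.oracle − τ*)²] = ((1 − π_M)/π_M)·‖Δ(1)‖_n² + ((1 − π_M̄)/π_M̄)·‖Δ(0)‖_n² + 2·⟨Δ(1), Δ(0)⟩_n. -/

import Mathlib

open MeasureTheory ProbabilityTheory
open scoped BigOperators

lemma my_int01 {Ω : Type*} [MeasurableSpace Ω] (P : Measure Ω) [IsProbabilityMeasure P]
    {X : Ω → ℝ} (hX : Measurable X) (h01 : ∀ ω, X ω = 0 ∨ X ω = 1) :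
    Integrable X P := by
  refine (integrable_const (1:ℝ)).mono' hX.aestronglyMeasurable ?_
  filter_upwards with ω
  rcases h01 ω with h | h <;> simp [h]

lemma my_exp01 {Ω : Type*} [MeasurableSpace Ω] (P : Measure Ω) [IsProbabilityMeasure P]
    {X : Ω → ℝ} (hX : Measurable X) (h01 : ∀ ω, X ω = 0 ∨ X ω = 1)
    {p : ℝ} (hp : 0 ≤ p) (hP : P {ω | X ω = 1} = ENNReal.ofReal p) :
    ∫ ω, X ω ∂P = p := by
  have hset : MeasurableSet {ω | X ω = 1} := hX (measurableSet_singleton 1)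
  have hXeq : X = Set.indicator {ω | X ω = 1} (fun _ => (1:ℝ)) := by
    funext ω
    rcases h01 ω with h | h <;> simp [Set.indicator_apply, h]
  rw [hXeq, integral_indicator_const _ hset]
  simp [measureReal_def, hP, ENNReal.toReal_ofReal hp]

set_option maxHeartbeats 1600000 in
theorem oracle_dc_unbiased_and_mse
    {Ω : Type*} [MeasurableSpace Ω] (P : Measure Ω) [IsProbabilityMeasure P]
    (n d : ℕ) (hn : 0 < n)
    (πT πR πM πRb πMb : ℝ)
    (hπT : πT ∈ Set.Ioo (0 : ℝ) 1) (hπR : πR ∈ Set.Ioo (0 : ℝ) 1)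
    (hπM : πM ∈ Set.Ioo (0 : ℝ) 1) (hπRb : πRb ∈ Set.Ioo (0 : ℝ) 1)
    (hπMb : πMb ∈ Set.Ioo (0 : ℝ) 1)
    (y1 y0 : Fin n → ℝ) (x : Fin n → Fin d → ℝ)
    (f1 f0 : (Fin d → ℝ) → ℝ)
    -- the decorrelating quadruples, coupled with the treatment indicators
    (T R M Rb Mb : Fin n → Ω → ℝ)
    (hTmeas : ∀ i, Measurable (T i)) (hRmeas : ∀ i, Measurable (R i))
    (hMmeas : ∀ i, Measurable (M i)) (hRbmeas : ∀ i, Measurable (Rb i))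
    (hMbmeas : ∀ i, Measurable (Mb i))
    (hT01 : ∀ i ω, T i ω = 0 ∨ T i ω = 1) (hR01 : ∀ i ω, R i ω = 0 ∨ R i ω = 1)
    (hM01 : ∀ i ω, M i ω = 0 ∨ M i ω = 1) (hRb01 : ∀ i ω, Rb i ω = 0 ∨ Rb i ω = 1)
    (hMb01 : ∀ i ω, Mb i ω = 0 ∨ Mb i ω = 1)
    (hTber : ∀ i, P {ω | T i ω = 1} = ENNReal.ofReal πT)
    (hRber : ∀ i, P {ω | R i ω = 1} = ENNReal.ofReal πR)
    (hMber : ∀ i, P {ω | M i ω = 1} = ENNReal.ofReal πM)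
    (hRbber : ∀ i, P {ω | Rb i ω = 1} = ENNReal.ofReal πRb)
    (hMbber : ∀ i, P {ω | Mb i ω = 1} = ENNReal.ofReal πMb)
    (hRM : ∀ i, IndepFun (R i) (M i) P)
    (hRbMb : ∀ i, IndepFun (Rb i) (Mb i) P)
    (hrel : πT = πM + πR - πM * πR)
    (hrelb : 1 - πT = πMb + πRb - πMb * πRb)
    (hcouple : ∀ i ω, max (R i ω) (M i ω) ≤ T i ω ∧ max (Rb i ω) (Mb i ω) ≤ 1 - T i ω)
    (hiid : iIndepFun
      (fun i ω => (T i ω, R i ω, M i ω, Rb i ω, Mb i ω)) P)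
    -- observed outcomes, residuals, target, estimator
    (Y : Fin n → Ω → ℝ)
    (hY : ∀ i ω, Y i ω = if T i ω = 1 then y1 i else y0 i)
    (Δ1 Δ0 : Fin n → ℝ)
    (hΔ1 : ∀ i, Δ1 i = y1 i - f1 (x i)) (hΔ0 : ∀ i, Δ0 i = y0 i - f0 (x i))
    (τstar : ℝ) (hτstar : τstar = (1 / (n : ℝ)) * ∑ i, (y1 i - y0 i))
    (τhat : Ω → ℝ)
    (hτhat : ∀ ω, τhat ω =
      (1 / ((n : ℝ) * πM)) * ∑ i, (Y i ω - f1 (x i)) * M i ω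
        - (1 / ((n : ℝ) * πMb)) * ∑ i, (Y i ω - f0 (x i)) * Mb i ω
        + (1 / (n : ℝ)) * ∑ i, (f1 (x i) - f0 (x i))) :
    (∫ ω, τhat ω ∂P = τstar) ∧
      (n : ℝ) * ∫ ω, (τhat ω - τstar) ^ 2 ∂P
        = (1 - πM) / πM * ((1 / (n : ℝ)) * ∑ i, (Δ1 i) ^ 2)
          + (1 - πMb) / πMb * ((1 / (n : ℝ)) * ∑ i, (Δ0 i) ^ 2)
          + 2 * ((1 / (n : ℝ)) * ∑ i, Δ1 i * Δ0 i) := by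
  obtain ⟨hπM0, hπM1⟩ := hπM
  obtain ⟨hπMb0, hπMb1⟩ := hπMb
  have hπMne : πM ≠ 0 := ne_of_gt hπM0
  have hπMbne : πMb ≠ 0 := ne_of_gt hπMb0
  have hnR : (n : ℝ) ≠ 0 := Nat.cast_ne_zero.mpr hn.ne'
  -- the centered per-unit summands
  obtain ⟨Z, hZdef⟩ : ∃ Z : Fin n → Ω → ℝ,
      Z = fun i ω => Δ1 i / πM * M i ω - Δ0 i / πMb * Mb i ω + (Δ0 i - Δ1 i) := ⟨_, rfl⟩
  -- basic coupling facts
  have hMT : ∀ i ω, M i ω ≤ T i ω := fun i ω =>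
    le_trans (le_max_right _ _) (hcouple i ω).1
  have hMbT : ∀ i ω, Mb i ω ≤ 1 - T i ω := fun i ω =>
    le_trans (le_max_right _ _) (hcouple i ω).2
  have hMMb : ∀ i ω, M i ω * Mb i ω = 0 := by
    intro i ω
    rcases hM01 i ω with h | h
    · simp [h]
    rcases hMb01 i ω with h' | h'
    · simp [h']
    exfalso
    have h1 := hMT i ω
    have h2 := hMbT i ω
    rw [h] at h1; rw [h'] at h2
    linarith
  have hYM : ∀ i ω, (Y i ω - f1 (x i)) * M i ω = Δ1 i * M i ω := by
    intro i ω
    rcases hM01 i ω with h | h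
    · simp [h]
    have hT1 : T i ω = 1 := by
      have h1 := hMT i ω; rw [h] at h1
      rcases hT01 i ω with ht | ht
      · rw [ht] at h1; linarith
      · exact ht
    rw [hY i ω, if_pos hT1, hΔ1 i]
  have hYMb : ∀ i ω, (Y i ω - f0 (x i)) * Mb i ω = Δ0 i * Mb i ω := by
    intro i ω
    rcases hMb01 i ω with h | h
    · simp [h]
    have hT0 : T i ω = 0 := by
      have h2 := hMbT i ω; rw [h] at h2
      rcases hT01 i ω with ht | ht
      · exact ht
      · rw [ht] at h2; linarith
    rw [hY i ω, if_neg (by rw [hT0]; norm_num), hΔ0 i]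
  -- pointwise decomposition
  have hpt : ∀ ω, τhat ω = τstar + (1 / (n : ℝ)) * ∑ i, Z i ω := by
    intro ω
    have e1 : (∑ i, (Y i ω - f1 (x i)) * M i ω) = ∑ i, Δ1 i * M i ω :=
      Finset.sum_congr rfl fun i _ => hYM i ω
    have e2 : (∑ i, (Y i ω - f0 (x i)) * Mb i ω) = ∑ i, Δ0 i * Mb i ω :=
      Finset.sum_congr rfl fun i _ => hYMb i ω
    rw [hτhat ω, hτstar, e1, e2]
    simp only [hZdef]
    rw [Finset.mul_sum, Finset.mul_sum, Finset.mul_sum, Finset.mul_sum, Finset.mul_sum,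
      ← Finset.sum_sub_distrib, ← Finset.sum_add_distrib, ← Finset.sum_add_distrib]
    refine Finset.sum_congr rfl fun i _ => ?_
    rw [hΔ1 i, hΔ0 i]
    field_simp
    ring
  -- integrability and expectations
  have hMint : ∀ i, Integrable (M i) P := fun i => my_int01 P (hMmeas i) (hM01 i)
  have hMbint : ∀ i, Integrable (Mb i) P := fun i => my_int01 P (hMbmeas i) (hMb01 i)
  have hMexp : ∀ i, ∫ ω, M i ω ∂P = πM := fun i =>
    my_exp01 P (hMmeas i) (hM01 i) hπM0.le (hMber i)
  have hMbexp : ∀ i, ∫ ω, Mb i ω ∂P = πMb := fun i =>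
    my_exp01 P (hMbmeas i) (hMb01 i) hπMb0.le (hMbber i)
  have hZmeas : ∀ i, Measurable (Z i) := by
    intro i; simp only [hZdef]
    exact (((hMmeas i).const_mul _).sub ((hMbmeas i).const_mul _)).add measurable_const
  have hZint : ∀ i, Integrable (Z i) P := by
    intro i; simp only [hZdef]
    exact (((hMint i).const_mul _).sub ((hMbint i).const_mul _)).add (integrable_const _)
  have hZexp : ∀ i, ∫ ω, Z i ω ∂P = 0 := by
    intro i
    simp only [hZdef]
    have hf1 : Integrable (fun ω => Δ1 i / πM * M i ω - Δ0 i / πMb * Mb i ω) P :=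
      ((hMint i).const_mul _).sub ((hMbint i).const_mul _)
    rw [integral_add hf1 (integrable_const _),
      integral_sub ((hMint i).const_mul _) ((hMbint i).const_mul _),
      integral_const_mul, integral_const_mul, hMexp i, hMbexp i, integral_const]
    simp
    field_simp
    ring
  -- bound on Z
  have hZbd : ∀ i ω, |Z i ω| ≤ |Δ1 i / πM| + |Δ0 i / πMb| + |Δ0 i - Δ1 i| := by
    intro i ω
    simp only [hZdef]
    have hm : |Δ1 i / πM * M i ω| ≤ |Δ1 i / πM| := by
      rcases hM01 i ω with h | h <;> simp [h, abs_nonneg]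
    have hmb : |Δ0 i / πMb * Mb i ω| ≤ |Δ0 i / πMb| := by
      rcases hMb01 i ω with h | h <;> simp [h, abs_nonneg]
    calc |Δ1 i / πM * M i ω - Δ0 i / πMb * Mb i ω + (Δ0 i - Δ1 i)|
        ≤ |Δ1 i / πM * M i ω - Δ0 i / πMb * Mb i ω| + |Δ0 i - Δ1 i| := abs_add_le _ _
      _ ≤ |Δ1 i / πM * M i ω| + |Δ0 i / πMb * Mb i ω| + |Δ0 i - Δ1 i| := by
          have := abs_sub (Δ1 i / πM * M i ω) (Δ0 i / πMb * Mb i ω)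
          linarith
      _ ≤ |Δ1 i / πM| + |Δ0 i / πMb| + |Δ0 i - Δ1 i| := by linarith
  have hZZint : ∀ i j, Integrable (fun ω => Z i ω * Z j ω) P := by
    intro i j
    set Bi := |Δ1 i / πM| + |Δ0 i / πMb| + |Δ0 i - Δ1 i| with hBi
    set Bj := |Δ1 j / πM| + |Δ0 j / πMb| + |Δ0 j - Δ1 j| with hBj
    refine (integrable_const (Bi * Bj)).mono'
      ((hZmeas i).mul (hZmeas j)).aestronglyMeasurable ?_
    filter_upwards with ω
    rw [Real.norm_eq_abs, abs_mul]
    exact mul_le_mul (hZbd i ω) (hZbd j ω) (abs_nonneg _)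
      (le_trans (abs_nonneg _) (hZbd i ω))
  -- second moment of Z i
  have hsq : ∀ i, ∫ ω, Z i ω ^ 2 ∂P
      = (1 - πM) / πM * Δ1 i ^ 2 + (1 - πMb) / πMb * Δ0 i ^ 2 + 2 * (Δ1 i * Δ0 i) := by
    intro i
    set a := Δ1 i ^ 2 * (1 / πM ^ 2 - 2 / πM) + 2 * Δ1 i * Δ0 i / πM with ha
    set b := Δ0 i ^ 2 * (1 / πMb ^ 2 - 2 / πMb) + 2 * Δ1 i * Δ0 i / πMb with hb
    set c := (Δ0 i - Δ1 i) ^ 2 with hc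
    have hptsq : ∀ ω, Z i ω ^ 2 = a * M i ω + b * Mb i ω + c := by
      intro ω
      simp only [hZdef, ha, hb, hc]
      rcases hM01 i ω with h | h <;> rcases hMb01 i ω with h' | h'
      · rw [h, h']; field_simp; try ring
      · rw [h, h']; field_simp; try ring
      · rw [h, h']; field_simp; try ring
      · exfalso; have := hMMb i ω; rw [h, h'] at this; norm_num at this
    have h1 : ∫ ω, Z i ω ^ 2 ∂P = ∫ ω, (a * M i ω + b * Mb i ω + c) ∂P :=
      integral_congr_ae (Filter.Eventually.of_forall hptsq)
    have hfa : Integrable (fun ω => a * M i ω + b * Mb i ω) P :=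
      ((hMint i).const_mul a).add ((hMbint i).const_mul b)
    rw [h1, integral_add hfa (integrable_const _),
      integral_add ((hMint i).const_mul a) ((hMbint i).const_mul b),
      integral_const_mul, integral_const_mul, hMexp i, hMbexp i, integral_const]
    simp only [probReal_univ, measure_univ, ENNReal.toReal_one, smul_eq_mul, one_mul]
    rw [ha, hb, hc]
    field_simp
    ring
  -- cross terms vanish
  have hcross : ∀ i j, i ≠ j → ∫ ω, Z i ω * Z j ω ∂P = 0 := by
    intro i j hij
    have hQ : IndepFun (fun ω => (T i ω, R i ω, M i ω, Rb i ω, Mb i ω))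
        (fun ω => (T j ω, R j ω, M j ω, Rb j ω, Mb j ω)) P := hiid.indepFun hij
    have hφ : ∀ k : Fin n, Measurable (fun p : ℝ × ℝ × ℝ × ℝ × ℝ =>
        Δ1 k / πM * p.2.2.1 - Δ0 k / πMb * p.2.2.2.2 + (Δ0 k - Δ1 k)) := by
      intro k; fun_prop
    have hind : IndepFun (Z i) (Z j) P := by
      simp only [hZdef]
      exact hQ.comp (hφ i) (hφ j)
    have h2 : (fun ω => Z i ω * Z j ω) = Z i * Z j := rfl
    rw [h2, hind.integral_mul_eq_mul_integral (hZint i).aestronglyMeasurable (hZint j).aestronglyMeasurable, hZexp i, hZexp j, mul_zero]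
  -- the sum-of-squares identity
  have hsum2 : ∫ ω, (∑ i, Z i ω) ^ 2 ∂P
      = ∑ i, ((1 - πM) / πM * Δ1 i ^ 2 + (1 - πMb) / πMb * Δ0 i ^ 2 + 2 * (Δ1 i * Δ0 i)) := by
    have hexpand : ∀ ω, (∑ i, Z i ω) ^ 2 = ∑ i, ∑ j, Z i ω * Z j ω := by
      intro ω; rw [sq, Finset.sum_mul_sum]
    rw [integral_congr_ae (Filter.Eventually.of_forall hexpand),
      integral_finset_sum _ (fun i _ => integrable_finset_sum _ fun j _ => hZZint i j)]
    refine Finset.sum_congr rfl fun i _ => ?_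
    rw [integral_finset_sum _ (fun j _ => hZZint i j)]
    rw [Finset.sum_eq_single i (fun j _ hji => hcross i j (Ne.symm hji))
      (fun h => absurd (Finset.mem_univ i) h)]
    have h3 : (fun ω => Z i ω * Z i ω) = fun ω => Z i ω ^ 2 := by
      funext ω; rw [sq]
    rw [h3, hsq i]
  -- unbiasedness
  have hunb : ∫ ω, τhat ω ∂P = τstar := by
    have hg : Integrable (fun ω => 1 / (n : ℝ) * ∑ i, Z i ω) P :=
      (integrable_finset_sum _ fun i _ => hZint i).const_mul _
    rw [integral_congr_ae (Filter.Eventually.of_forall hpt),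
      integral_add (integrable_const _) hg,
      integral_const, integral_const_mul, integral_finset_sum _ (fun i _ => hZint i)]
    simp [hZexp]
  refine ⟨hunb, ?_⟩
  have hptsq2 : ∀ ω, (τhat ω - τstar) ^ 2 = (1 / (n : ℝ)) ^ 2 * (∑ i, Z i ω) ^ 2 := by
    intro ω; rw [hpt ω]; ring
  rw [integral_congr_ae (Filter.Eventually.of_forall hptsq2), integral_const_mul, hsum2]
  rw [Finset.sum_add_distrib, Finset.sum_add_distrib, ← Finset.mul_sum, ← Finset.mul_sum,
    ← Finset.mul_sum]
  field_simp
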